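/- Let m ≥ 3. For distinct a, b ∈ V = 𝔽₂^{2m}, let π_{a,b} be the permutation of V given by p ↦ t_{a+b}(p) + (1 + φ(a,b))·(a+b). Then the subgroup of Sym(V) generated by all the permutations π_{a,b} equals the group of all affine symplectic transformations of V, i.e. the set of permutations of the form p ↦ g(p) + w where w ∈ V and g is an 𝔽₂-linear automorphism of V with φ(g(u), g(v)) = φ(u,v) for all u, v. (This is the group L(D^a) ≅ 2^{2m}.Sp_{2m}(2) of move sequences of the design D^a, since the elementary move [a,b] is the permutation π_{a,b}.) -/

import Mathlib

open Matrix

/-- Row vectors in `𝔽₂^{2m}`, with coordinates indexed by `Fin m ⊕ Fin m`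
(the first block and the second block of `m` coordinates). -/
abbrev Vm (m : ℕ) := (Fin m ⊕ Fin m) → ZMod 2

/-- The block matrix `e = (0 Iₘ; 0 0)`. -/
def eMat (m : ℕ) : Matrix (Fin m ⊕ Fin m) (Fin m ⊕ Fin m) (ZMod 2) :=
  Matrix.fromBlocks 0 1 0 0

/-- The block matrix `f = e + eᵀ = (0 Iₘ; Iₘ 0)`. -/
def fMat (m : ℕ) : Matrix (Fin m ⊕ Fin m) (Fin m ⊕ Fin m) (ZMod 2) :=
  eMat m + (eMat m)ᵀ

/-- The alternating bilinear form `φ(u,v) = u f vᵀ`. -/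
def phi (m : ℕ) (u v : Vm m) : ZMod 2 := u ⬝ᵥ (fMat m).mulVec v

/-- The quadratic form `θ₀(u) = u e uᵀ`. -/
def theta0 (m : ℕ) (u : Vm m) : ZMod 2 := u ⬝ᵥ (eMat m).mulVec u

/-- The quadratic form `θ_a(u) = θ₀(u) + φ(u,a)`. -/
def theta (m : ℕ) (a u : Vm m) : ZMod 2 := theta0 m u + phi m u a

/-- The transvection `t_c : u ↦ u + φ(u,c)·c`. -/
def tvec (m : ℕ) (c u : Vm m) : Vm m := u + phi m u c • c

/-- The elementary move `[a,b]` of the design `D^a`: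
`p ↦ t_{a+b}(p) + (1 + φ(a,b))·(a+b)`. -/
def piMove (m : ℕ) (a b p : Vm m) : Vm m :=
  tvec m (a + b) p + (1 + phi m a b) • (a + b)

namespace SymAux
variable {m : ℕ}

lemma z2 : ∀ x : ZMod 2, x + x = 0 := by decide
lemma z2' : ∀ x : ZMod 2, x ≠ 0 → x = 1 := by decide

lemma vv (v : Vm m) : v + v = 0 := funext fun j => z2 (v j)

lemma vA (x y : Vm m) : x + (x + y) = y := by rw [← add_assoc, vv, zero_add]
lemma vC (x y : Vm m) : (x + y) + y = x := by rw [add_assoc, vv, add_zero]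

lemma phi_apply (u v : Vm m) :
    phi m u v = ∑ i : Fin m, (u (Sum.inl i) * v (Sum.inr i) + u (Sum.inr i) * v (Sum.inl i)) := by
  simp [phi, fMat, eMat, mulVec, dotProduct, Fintype.sum_sum_type, fromBlocks,
    Matrix.one_apply, Finset.mul_sum, mul_comm]
  exact Finset.sum_add_distrib.symm

lemma phi_comm (u v : Vm m) : phi m u v = phi m v u := by
  rw [phi_apply, phi_apply]
  exact Finset.sum_congr rfl fun i _ => by ring

lemma phi_add_left (u u' v : Vm m) : phi m (u + u') v = phi m u v + phi m u' v := by
  simp [phi, add_dotProduct]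

lemma phi_add_right (u v v' : Vm m) : phi m u (v + v') = phi m u v + phi m u v' := by
  simp [phi, mulVec_add, dotProduct_add]

lemma phi_smul_left (r : ZMod 2) (u v : Vm m) : phi m (r • u) v = r * phi m u v := by
  simp [phi, smul_dotProduct, smul_eq_mul]

lemma phi_smul_right (r : ZMod 2) (u v : Vm m) : phi m u (r • v) = r * phi m u v := by
  simp [phi, mulVec_smul, dotProduct_smul, smul_eq_mul]

lemma phi_self (u : Vm m) : phi m u u = 0 := by
  rw [phi_apply]
  apply Finset.sum_eq_zero
  intro i _
  rw [mul_comm]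
  exact z2 _

lemma phi_zero_left (v : Vm m) : phi m 0 v = 0 := by simp [phi]
lemma phi_zero_right (v : Vm m) : phi m v 0 = 0 := by simp [phi]

def EE (i : Fin m) : Vm m := Pi.single (Sum.inl i) 1
def FF (i : Fin m) : Vm m := Pi.single (Sum.inr i) 1

lemma phi_EE (i : Fin m) (v : Vm m) : phi m (EE i) v = v (Sum.inr i) := by
  simp [phi_apply, EE, Pi.single_apply]

lemma phi_FF (i : Fin m) (v : Vm m) : phi m (FF i) v = v (Sum.inl i) := by
  simp [phi_apply, FF, Pi.single_apply]

end SymAux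
namespace SymAux
variable {m : ℕ}

lemma tvec_linear (c : Vm m) : IsLinearMap (ZMod 2) (tvec m c) := by
  constructor
  · intro u v
    simp only [tvec, phi_add_left, add_smul]
    abel
  · intro r u
    simp only [tvec, phi_smul_left, smul_add, smul_smul]

lemma tvec_invol (c : Vm m) : Function.Involutive (tvec m c) := by
  intro u
  simp only [tvec, phi_add_left, phi_smul_left, phi_self, mul_zero, add_zero, add_smul]
  rw [add_assoc, vv, add_zero]

lemma tvec_symplectic (c u v : Vm m) :
    phi m (tvec m c u) (tvec m c v) = phi m u v := by
  simp only [tvec, phi_add_left, phi_add_right, phi_smul_left, phi_smul_right, phi_self,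
    mul_zero]
  rw [phi_comm c v]
  ring_nf
  rw [mul_two, z2, add_zero]

def tP (m : ℕ) (c : Vm m) : Equiv.Perm (Vm m) := (tvec_invol c).toPerm _

@[simp] lemma tP_apply (c u : Vm m) : tP m c u = tvec m c u := rfl

lemma tP_fixed {c u : Vm m} (h : phi m u c = 0) : tP m c u = u := by
  simp [tP_apply, tvec, h]

lemma tP_moves {c u : Vm m} (h : phi m u c = 1) : tP m c u = u + c := by
  simp [tP_apply, tvec, h]

lemma tP_zero : tP m 0 = 1 := by
  ext u
  simp [tP_apply, tvec]

def Wmem (k : ℕ) (v : Vm m) : Prop :=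
  ∀ i : Fin m, i.val < k → v (Sum.inl i) = 0 ∧ v (Sum.inr i) = 0

lemma Wmem_add {k : ℕ} {u v : Vm m} (hu : Wmem k u) (hv : Wmem k v) : Wmem k (u + v) := by
  intro i hi
  obtain ⟨h1, h2⟩ := hu i hi
  obtain ⟨h3, h4⟩ := hv i hi
  constructor <;> simp [h1, h2, h3, h4]

lemma Wmem_zero {k : ℕ} : Wmem k (0 : Vm m) := fun i _ => ⟨rfl, rfl⟩

lemma Wmem_EE {k : ℕ} {i : Fin m} (h : k ≤ i.val) : Wmem k (EE i : Vm m) := by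
  intro j hj
  constructor <;> simp [EE, Pi.single_apply]
  intro e; exact absurd (e ▸ hj) (by omega)

lemma Wmem_FF {k : ℕ} {i : Fin m} (h : k ≤ i.val) : Wmem k (FF i : Vm m) := by
  intro j hj
  constructor <;> simp [FF, Pi.single_apply]
  intro e; exact absurd (e ▸ hj) (by omega)

lemma exists_pair {k : ℕ} {v : Vm m} (hv : v ≠ 0) (hw : Wmem k v) :
    ∃ z : Vm m, Wmem k z ∧ phi m v z = 1 := by
  obtain ⟨j, hj⟩ := Function.ne_iff.mp hv
  have hj1 : v j = 1 := z2' _ hj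
  rcases j with i | i
  · have hk : k ≤ i.val := by
      by_contra h
      exact hj ((hw i (by omega)).1)
    exact ⟨FF i, Wmem_FF hk, by rw [phi_comm, phi_FF, hj1]⟩
  · have hk : k ≤ i.val := by
      by_contra h
      exact hj ((hw i (by omega)).2)
    exact ⟨EE i, Wmem_EE hk, by rw [phi_comm, phi_EE, hj1]⟩

lemma two_cases (x : ZMod 2) : x = 0 ∨ x = 1 := by revert x; decide

lemma exists_pair2 {k : ℕ} {u v : Vm m} (hu : u ≠ 0) (hv : v ≠ 0)
    (hwu : Wmem k u) (hwv : Wmem k v) :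
    ∃ z : Vm m, Wmem k z ∧ phi m u z = 1 ∧ phi m v z = 1 := by
  obtain ⟨zu, hzu, hzu1⟩ := exists_pair hu hwu
  obtain ⟨zv, hzv, hzv1⟩ := exists_pair hv hwv
  rcases two_cases (phi m v zu) with h1 | h1
  · rcases two_cases (phi m u zv) with h2 | h2
    · refine ⟨zu + zv, Wmem_add hzu hzv, ?_, ?_⟩
      · rw [phi_add_right, hzu1, h2, add_zero]
      · rw [phi_add_right, h1, hzv1, zero_add]
    · exact ⟨zv, hzv, h2, hzv1⟩
  · exact ⟨zu, hzu, hzu1, h1⟩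

end SymAux
namespace SymAux
variable {m : ℕ}

def Smove (m : ℕ) : Set (Equiv.Perm (Vm m)) :=
  {g | ∃ a b : Vm m, a ≠ b ∧ ∀ p : Vm m, g p = piMove m a b p}

def Gsub (m : ℕ) : Subgroup (Equiv.Perm (Vm m)) := Subgroup.closure (Smove m)

lemma tP_mem (c : Vm m) : tP m c ∈ Gsub m := by
  rcases eq_or_ne c 0 with rfl | hc
  · rw [tP_zero]; exact one_mem _
  · apply Subgroup.subset_closure
    have hc0 : Wmem 0 c := fun i hi => absurd hi (by omega)
    obtain ⟨z, _, hz⟩ := exists_pair hc hc0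
    refine ⟨z, z + c, ?_, ?_⟩
    · intro h
      exact hc (left_eq_add.mp h)
    · intro p
      have e1 : z + (z + c) = c := vA z c
      have e2 : phi m z (z + c) = 1 := by
        rw [phi_add_right, phi_self, zero_add, phi_comm]; exact hz
      rw [piMove, e1, e2]
      have : (1 + 1 : ZMod 2) = 0 := by decide
      rw [this, zero_smul, add_zero, tP_apply]

lemma addRight_mem (w : Vm m) : Equiv.addRight w ∈ Gsub m := by
  rcases eq_or_ne w 0 with rfl | hw
  · have : (Equiv.addRight (0 : Vm m)) = 1 := by ext p; simp
    rw [this]; exact one_mem _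
  · have hS : (tP m w).trans (Equiv.addRight w) ∈ Smove m := by
      refine ⟨0, w, Ne.symm hw, ?_⟩
      intro p
      have e2 : phi m (0 : Vm m) w = 0 := phi_zero_left w
      simp only [piMove, zero_add, e2, add_zero, one_smul, Equiv.trans_apply,
        Equiv.coe_addRight, tP_apply]
    have key : Equiv.addRight w = ((tP m w).trans (Equiv.addRight w)) * tP m w := by
      ext p
      simp only [Equiv.Perm.mul_apply, Equiv.trans_apply, Equiv.coe_addRight, tP_apply]
      rw [tvec_invol w p]
    rw [key]
    exact mul_mem (Subgroup.subset_closure hS) (tP_mem w)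

def Good (g : Equiv.Perm (Vm m)) : Prop :=
  IsLinearMap (ZMod 2) ⇑g ∧ ∀ u v : Vm m, phi m (g u) (g v) = phi m u v

lemma Good.mul {g h : Equiv.Perm (Vm m)} (hg : Good g) (hh : Good h) : Good (g * h) := by
  refine ⟨⟨?_, ?_⟩, ?_⟩
  · intro u v
    simp only [Equiv.Perm.mul_apply, hh.1.map_add, hg.1.map_add]
  · intro r u
    simp only [Equiv.Perm.mul_apply, hh.1.map_smul, hg.1.map_smul]
  · intro u v
    simp only [Equiv.Perm.mul_apply, hg.2, hh.2]

lemma Good.tP (c : Vm m) : Good (tP m c) :=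
  ⟨tvec_linear c, tvec_symplectic c⟩

end SymAux
namespace SymAux
variable {m : ℕ}

lemma vtrans {k : ℕ} {u v : Vm m} (hu0 : u ≠ 0) (hv0 : v ≠ 0)
    (hu : Wmem k u) (hv : Wmem k v) :
    ∃ c₁ c₂ : Vm m, Wmem k c₁ ∧ Wmem k c₂ ∧ tP m c₂ (tP m c₁ u) = v := by
  rcases two_cases (phi m u v) with h | h
  · obtain ⟨z, hz, hz1, hz2⟩ := exists_pair2 hu0 hv0 hu hv
    refine ⟨u + z, z + v, Wmem_add hu hz, Wmem_add hz hv, ?_⟩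
    have e1 : phi m u (u + z) = 1 := by rw [phi_add_right, phi_self, zero_add, hz1]
    rw [tP_moves e1, vA]
    have e2 : phi m z (z + v) = 1 := by
      rw [phi_add_right, phi_self, zero_add, phi_comm]; exact hz2
    rw [tP_moves e2, vA]
  · refine ⟨u + v, 0, Wmem_add hu hv, Wmem_zero, ?_⟩
    have e1 : phi m u (u + v) = 1 := by rw [phi_add_right, phi_self, zero_add, h]
    rw [tP_moves e1, vA, tP_zero]
    rfl

lemma ptrans {k : ℕ} {u w w' : Vm m} (hu : Wmem k u) (hw : Wmem k w) (hw' : Wmem k w')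
    (h1 : phi m u w = 1) (h2 : phi m u w' = 1) :
    ∃ c₁ c₂ : Vm m, Wmem k c₁ ∧ Wmem k c₂ ∧
      tP m c₂ (tP m c₁ u) = u ∧ tP m c₂ (tP m c₁ w) = w' := by
  rcases two_cases (phi m w w') with h | h
  · refine ⟨w + w' + u, u, Wmem_add (Wmem_add hw hw') hu, hu, ?_, ?_⟩
    · have e1 : phi m u (w + w' + u) = 0 := by
        rw [phi_add_right, phi_add_right, h1, h2, phi_self]; decide
      rw [tP_fixed e1, tP_fixed (phi_self u)]
    · have e2 : phi m w (w + w' + u) = 1 := by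
        rw [phi_add_right, phi_add_right, phi_self, h, phi_comm w u, h1]; decide
      rw [tP_moves e2, ← add_assoc w (w + w') u, vA]
      have e3 : phi m (w' + u) u = 1 := by
        rw [phi_add_left, phi_self, add_zero, phi_comm]; exact h2
      rw [tP_moves e3, vC]
  · refine ⟨w + w', 0, Wmem_add hw hw', Wmem_zero, ?_, ?_⟩
    · have e1 : phi m u (w + w') = 0 := by
        rw [phi_add_right, h1, h2]; decide
      rw [tP_fixed e1, tP_zero]; rfl
    · have e2 : phi m w (w + w') = 1 := by
        rw [phi_add_right, phi_self, zero_add, h]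
      rw [tP_moves e2, vA, tP_zero]; rfl

lemma EE_ne_zero (i : Fin m) : (EE i : Vm m) ≠ 0 := by
  intro h
  have := congrFun h (Sum.inl i)
  simp [EE] at this

lemma perm_ne_zero {g : Equiv.Perm (Vm m)} (hg : Good g) {x : Vm m} (hx : x ≠ 0) :
    g x ≠ 0 := by
  intro h
  apply hx
  have h0 : g 0 = 0 := hg.1.map_zero
  exact g.injective (h.trans h0.symm)

lemma wmem_image {k : ℕ} {g : Equiv.Perm (Vm m)} (hg : Good g)
    (hfix : ∀ i : Fin m, i.val < k → g (EE i) = EE i ∧ g (FF i) = FF i)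
    {x : Vm m} (hx : Wmem k x) : Wmem k (g x) := by
  intro i hi
  constructor
  · rw [← phi_FF i (g x), ← (hfix i hi).2, hg.2, phi_FF]
    exact (hx i hi).1
  · rw [← phi_EE i (g x), ← (hfix i hi).1, hg.2, phi_EE]
    exact (hx i hi).2

lemma fix_step {k : ℕ} (hk : k < m) (g : Equiv.Perm (Vm m)) (hg : Good g)
    (hfix : ∀ i : Fin m, i.val < k → g (EE i) = EE i ∧ g (FF i) = FF i) :
    ∃ τ : Equiv.Perm (Vm m), τ ∈ Gsub m ∧ Good (τ * g) ∧
      ∀ i : Fin m, i.val < k + 1 → (τ * g) (EE i) = EE i ∧ (τ * g) (FF i) = FF i := by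
  set κ : Fin m := ⟨k, hk⟩ with hκ
  have hEκ : Wmem k (EE κ : Vm m) := Wmem_EE (le_refl k)
  have hFκ : Wmem k (FF κ : Vm m) := Wmem_FF (le_refl k)
  -- basis vectors are fixed by transvections with Wmem vectors
  have tfix : ∀ c : Vm m, Wmem k c → ∀ i : Fin m, i.val < k →
      tP m c (EE i) = EE i ∧ tP m c (FF i) = FF i := by
    intro c hc i hi
    constructor
    · exact tP_fixed (by rw [phi_EE]; exact (hc i hi).2)
    · exact tP_fixed (by rw [phi_FF]; exact (hc i hi).1)
  -- step 1 : move g (EE κ) to EE κ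
  have hu0 : g (EE κ) ≠ 0 := perm_ne_zero hg (EE_ne_zero κ)
  have huW : Wmem k (g (EE κ)) := wmem_image hg hfix hEκ
  obtain ⟨c₁, c₂, hc₁, hc₂, hmove⟩ := vtrans hu0 (EE_ne_zero κ) huW hEκ
  set g₁ : Equiv.Perm (Vm m) := tP m c₂ * tP m c₁ * g with hg₁
  have hg₁good : Good g₁ := (Good.mul (Good.tP c₂) (Good.tP c₁)).mul hg
  have hg₁fix : ∀ i : Fin m, i.val < k → g₁ (EE i) = EE i ∧ g₁ (FF i) = FF i := by
    intro i hi
    have h1 := hfix i hi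
    have h2 := tfix c₁ hc₁ i hi
    have h3 := tfix c₂ hc₂ i hi
    constructor <;> simp only [hg₁, Equiv.Perm.mul_apply, h1.1, h1.2, h2.1, h2.2, h3.1, h3.2]
  have hg₁E : g₁ (EE κ) = EE κ := by
    simp only [hg₁, Equiv.Perm.mul_apply]; exact hmove
  -- step 2 : move g₁ (FF κ) to FF κ fixing EE κ
  have hvW : Wmem k (g₁ (FF κ)) := wmem_image hg₁good hg₁fix hFκ
  have hφ1 : phi m (EE κ : Vm m) (g₁ (FF κ)) = 1 := by
    rw [← hg₁E, hg₁good.2, phi_EE]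
    simp [FF, Pi.single_apply]
  have hφ2 : phi m (EE κ : Vm m) (FF κ) = 1 := by
    rw [phi_EE]; simp [FF, Pi.single_apply]
  obtain ⟨d₁, d₂, hd₁, hd₂, hfixu, hmove2⟩ := ptrans hEκ hvW hFκ hφ1 hφ2
  refine ⟨tP m d₂ * tP m d₁ * (tP m c₂ * tP m c₁), ?_, ?_, ?_⟩
  · exact mul_mem (mul_mem (tP_mem d₂) (tP_mem d₁)) (mul_mem (tP_mem c₂) (tP_mem c₁))
  · exact ((((Good.tP d₂).mul (Good.tP d₁)).mul ((Good.tP c₂).mul (Good.tP c₁))).mul hg)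
  · intro i hi
    have hgrw : (tP m d₂ * tP m d₁ * (tP m c₂ * tP m c₁) * g) =
        tP m d₂ * tP m d₁ * g₁ := by
      rw [hg₁]; group
    rw [hgrw]
    rcases Nat.lt_or_ge i.val k with h | h
    · have h1 := hg₁fix i h
      have h2 := tfix d₁ hd₁ i h
      have h3 := tfix d₂ hd₂ i h
      constructor <;> simp only [Equiv.Perm.mul_apply, h1.1, h1.2, h2.1, h2.2, h3.1, h3.2]
    · have hik : i = κ := Fin.ext (show i.val = κ.val by simp [hκ]; omega)
      subst hik
      constructor
      · simp only [Equiv.Perm.mul_apply, hg₁E]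
        exact hfixu
      · simp only [Equiv.Perm.mul_apply]
        exact hmove2

end SymAux
namespace SymAux
variable {m : ℕ}

lemma single_smul_one (j : Fin m ⊕ Fin m) (r : ZMod 2) :
    (Pi.single j r : Vm m) = r • (Pi.single j 1 : Vm m) := by
  funext j'
  rcases eq_or_ne j' j with rfl | h
  · simp
  · simp [Pi.single_apply, h]

lemma eq_one_of_fix_all {g : Equiv.Perm (Vm m)} (hg : Good g)
    (hfix : ∀ i : Fin m, g (EE i) = EE i ∧ g (FF i) = FF i) : g = 1 := by
  have hsingle : ∀ j : Fin m ⊕ Fin m, g (Pi.single j 1) = Pi.single j 1 := by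
    rintro (i | i)
    · exact (hfix i).1
    · exact (hfix i).2
  apply Equiv.ext
  intro v
  have expand : ∑ j : Fin m ⊕ Fin m, (Pi.single j (v j) : Vm m) = v :=
    Finset.univ_sum_single v
  have hmap : g (∑ j : Fin m ⊕ Fin m, (Pi.single j (v j) : Vm m)) =
      ∑ j : Fin m ⊕ Fin m, g (Pi.single j (v j)) :=
    map_sum (IsLinearMap.mk' (⇑g) hg.1) _ _
  have : g v = v := by
    conv_lhs => rw [← expand]
    rw [hmap]
    conv_rhs => rw [← expand]
    refine Finset.sum_congr rfl fun j _ => ?_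
    rw [single_smul_one, hg.1.map_smul, hsingle j, ← single_smul_one]
  simpa using this

lemma good_mem (g : Equiv.Perm (Vm m)) (hg : Good g) : g ∈ Gsub m := by
  suffices H : ∀ d : ℕ, ∀ g : Equiv.Perm (Vm m), Good g →
      (∀ i : Fin m, i.val < m - d → g (EE i) = EE i ∧ g (FF i) = FF i) → g ∈ Gsub m by
    exact H m g hg (fun i hi => absurd hi (by omega))
  intro d
  induction d with
  | zero =>
    intro g hg hfix
    have h1 : g = 1 := eq_one_of_fix_all hg (fun i => hfix i (by simpa using i.isLt))
    rw [h1]; exact one_mem _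
  | succ d ih =>
    intro g hg hfix
    rcases Nat.lt_or_ge (m - (d + 1)) m with hk | hk
    · obtain ⟨τ, hτ, hτg, hτfix⟩ := fix_step hk g hg hfix
      have h2 : (τ * g) ∈ Gsub m := ih (τ * g) hτg (fun i hi => hτfix i (by omega))
      have h3 : g = τ⁻¹ * (τ * g) := by group
      rw [h3]
      exact mul_mem (inv_mem hτ) h2
    · exact ih g hg (fun i hi => hfix i (by omega))

def GR (m : ℕ) : Subgroup (Equiv.Perm (Vm m)) where
  carrier := {g : Equiv.Perm (Vm m) |
      ∃ (h : Vm m → Vm m) (w : Vm m),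
        IsLinearMap (ZMod 2) h ∧
        (∀ u v : Vm m, phi m (h u) (h v) = phi m u v) ∧
        ∀ p : Vm m, g p = h p + w}
  one_mem' :=
    ⟨id, 0, ⟨fun _ _ => rfl, fun _ _ => rfl⟩, fun _ _ => rfl, fun p => (add_zero p).symm⟩
  mul_mem' := by
    rintro g₁ g₂ ⟨h₁, w₁, l₁, s₁, e₁⟩ ⟨h₂, w₂, l₂, s₂, e₂⟩
    refine ⟨h₁ ∘ h₂, h₁ w₂ + w₁,
      ⟨fun u v => by simp [l₂.map_add, l₁.map_add],
       fun r u => by simp [l₂.map_smul, l₁.map_smul]⟩,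
      fun u v => by simp only [Function.comp_apply, s₁, s₂], fun p => ?_⟩
    simp only [Equiv.Perm.mul_apply, e₁, e₂, Function.comp_apply, l₁.map_add]
    abel
  inv_mem' := by
    rintro g ⟨h, w, l, s, e⟩
    have hinj : Function.Injective (IsLinearMap.mk' h l) := by
      intro a b hab
      apply g.injective
      rw [e a, e b]
      simp only [IsLinearMap.mk'_apply] at hab
      rw [hab]
    have hbij : Function.Bijective (IsLinearMap.mk' h l) :=
      ⟨hinj, (LinearMap.injective_iff_surjective).mp hinj⟩
    set Lq := LinearEquiv.ofBijective (IsLinearMap.mk' h l) hbij with hLq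
    have happ : ∀ x : Vm m, h (Lq.symm x) = x := by
      intro x
      have h1 : Lq (Lq.symm x) = x := Lq.apply_symm_apply x
      rwa [hLq, LinearEquiv.ofBijective_apply, IsLinearMap.mk'_apply] at h1
    refine ⟨fun p => Lq.symm p, Lq.symm w,
      ⟨fun a b => Lq.symm.map_add a b, fun r a => Lq.symm.map_smul r a⟩, ?_, ?_⟩
    · intro u v
      have h2 := s (Lq.symm u) (Lq.symm v)
      rw [happ, happ] at h2
      exact h2.symm
    · intro p
      apply g.injective
      rw [Equiv.Perm.inv_def, Equiv.apply_symm_apply, e]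
      show p = h (Lq.symm p + Lq.symm w) + w
      rw [l.map_add, happ, happ, vC]

end SymAux
theorem stmt_10 (m : ℕ) (hm : 3 ≤ m) :
    (Subgroup.closure {g : Equiv.Perm (Vm m) |
        ∃ a b : Vm m, a ≠ b ∧ ∀ p : Vm m, g p = piMove m a b p} :
      Set (Equiv.Perm (Vm m))) =
      {g : Equiv.Perm (Vm m) |
        ∃ (h : Vm m → Vm m) (w : Vm m),
          IsLinearMap (ZMod 2) h ∧
          (∀ u v : Vm m, phi m (h u) (h v) = phi m u v) ∧
          ∀ p : Vm m, g p = h p + w} := by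
  apply Set.Subset.antisymm
  · have hgen : SymAux.Smove m ⊆ ↑(SymAux.GR m) := by
      rintro g ⟨a, b, hab, hgp⟩
      exact ⟨tvec m (a + b), (1 + phi m a b) • (a + b), SymAux.tvec_linear _,
        SymAux.tvec_symplectic _, fun p => hgp p⟩
    have hle : Subgroup.closure (SymAux.Smove m) ≤ SymAux.GR m :=
      (Subgroup.closure_le _).mpr hgen
    exact fun g hg => hle hg
  · rintro g ⟨h, w, hlin, hsym, hgp⟩
    suffices hh : g ∈ SymAux.Gsub m from hh
    have hperm : ∀ p, (g.trans (Equiv.addRight w)) p = h p := by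
      intro p
      simp only [Equiv.trans_apply, Equiv.coe_addRight, hgp p]
      exact SymAux.vC (h p) w
    have hgood : SymAux.Good (g.trans (Equiv.addRight w)) := by
      constructor
      · have hco : ⇑(g.trans (Equiv.addRight w)) = h := funext hperm
        rw [hco]; exact hlin
      · intro u v
        rw [hperm, hperm]
        exact hsym u v
    have h1 : g.trans (Equiv.addRight w) ∈ SymAux.Gsub m :=
      SymAux.good_mem _ hgood
    have h2 : g = Equiv.addRight w * g.trans (Equiv.addRight w) := by
      ext p
      simp only [Equiv.Perm.mul_apply, Equiv.coe_addRight, hperm p, hgp p]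
    rw [h2]
    exact mul_mem (SymAux.addRight_mem w) h1
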